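/- Let f : L × M → Q_c^{p+n+2} be an isometric immersion of a Riemannian product (ρ ≡ 1) which is of type C at a point z (i.e. dim α(H_z,V_z) ≥ 2). If p ≥ 3 or n ≥ 3, then c = 0. -/

import Mathlib

open scoped RealInnerProductSpace

open Module Submodule in
lemma helper_orth {W : Type*} [NormedAddCommGroup W] [InnerProductSpace ℝ W]
    [FiniteDimensional ℝ W] (hW2 : Module.finrank ℝ W = 2)
    {w₁ w₂ x : W} (h1 : w₁ ≠ 0) (h2 : w₂ ∉ Submodule.span ℝ {w₁})
    (o1 : ⟪w₁, x⟫ = 0) (o2 : ⟪w₂, x⟫ = 0) : x = 0 := by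
  have hli : LinearIndependent ℝ ![w₁, w₂] := by
    rw [linearIndependent_fin2]
    simp only [Matrix.cons_val_one, Matrix.head_cons, Matrix.cons_val_zero]
    refine ⟨fun h => h2 (h ▸ Submodule.zero_mem _), fun a ha => ?_⟩
    apply h2
    have ha' : a ≠ 0 := by
      rintro rfl
      rw [zero_smul] at ha
      exact h1 ha.symm
    have : w₂ = a⁻¹ • w₁ := by
      rw [← ha, smul_smul, inv_mul_cancel₀ ha', one_smul]
    rw [this]
    exact Submodule.smul_mem _ _ (Submodule.mem_span_singleton_self w₁)
  have hspan : Submodule.span ℝ {w₁, w₂} = ⊤ := by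
    apply Submodule.eq_top_of_finrank_eq
    have hr : Set.range ![w₁, w₂] = {w₁, w₂} := by
      rw [Matrix.range_cons, Matrix.range_cons_empty]
      rfl
    rw [hW2, ← hr, finrank_span_eq_card hli]
    simp
  have hx : x ∈ Submodule.span ℝ ({w₁, w₂} : Set W) := hspan ▸ Submodule.mem_top
  obtain ⟨a, b, hab⟩ := Submodule.mem_span_pair.mp hx
  have key : (⟪a • w₁ + b • w₂, x⟫ : ℝ) = 0 := by
    rw [inner_add_left, real_inner_smul_left, real_inner_smul_left, o1, o2]
    ring
  rw [hab] at key
  exact inner_self_eq_zero.mp key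

lemma aux_key {E W : Type*} [NormedAddCommGroup E] [InnerProductSpace ℝ E]
    [NormedAddCommGroup W] [InnerProductSpace ℝ W] [FiniteDimensional ℝ W]
    (H V : Submodule ℝ E) (hH : H ≠ ⊥)
    (hdimV : 3 ≤ Module.finrank ℝ V)
    (hW2 : Module.finrank ℝ W = 2)
    (α : E →ₗ[ℝ] E →ₗ[ℝ] W) (c : ℝ)
    (flat : ∀ X ∈ H, ∀ Y ∈ H, ∀ v ∈ V, ∀ w ∈ V, ⟪α X w, α Y v⟫ = ⟪α X v, α Y w⟫)
    (symC : ∀ X ∈ H, ∀ u ∈ V, ∀ v ∈ V, ∀ w ∈ V, ⟪α X w, α u v⟫ = ⟪α X v, α u w⟫)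
    (eqE : ∀ X ∈ H, ∀ Y ∈ H, ∀ v ∈ V, ∀ w ∈ V,
      ⟪α X Y, α v w⟫ - ⟪α X w, α Y v⟫ = -(c * ⟪v, w⟫ * ⟪X, Y⟫))
    (htypeC : 2 ≤ Module.finrank ℝ
      (Submodule.span ℝ {w : W | ∃ Y ∈ H, ∃ v ∈ V, α Y v = w})) :
    c = 0 := by
  classical
  haveI : FiniteDimensional ℝ V := FiniteDimensional.of_finrank_pos (by omega)
  set s : Set W := {w : W | ∃ Y ∈ H, ∃ v ∈ V, α Y v = w} with hs
  -- extract a nonzero generator w₁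
  obtain ⟨w₁, hw₁s, hw₁0⟩ : ∃ w ∈ s, w ≠ 0 := by
    by_contra h
    push_neg at h
    have : Submodule.span ℝ s ≤ ⊥ := Submodule.span_le.mpr (fun x hx => by
      simp [h x hx])
    have h2 := Submodule.finrank_mono this
    rw [finrank_bot ℝ W] at h2
    omega
  -- extract a generator outside the line spanned by w₁
  obtain ⟨w₂, hw₂s, hw₂⟩ : ∃ w ∈ s, w ∉ Submodule.span ℝ {w₁} := by
    by_contra h
    push_neg at h
    have hle : Submodule.span ℝ s ≤ Submodule.span ℝ {w₁} :=
      Submodule.span_le.mpr h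
    have := Submodule.finrank_mono hle
    rw [finrank_span_singleton hw₁0] at this
    omega
  obtain ⟨X₁, hX₁, v₁, hv₁, hXv₁⟩ := hw₁s
  obtain ⟨X₂, hX₂, v₂, hv₂, hXv₂⟩ := hw₂s
  -- the partial maps
  set f₁ : V →ₗ[ℝ] W := (α X₁).comp V.subtype with hf₁
  set f₂ : V →ₗ[ℝ] W := (α X₂).comp V.subtype with hf₂
  -- final common step
  have final : ∀ X ∈ H, X ≠ 0 → ∀ v₀ ∈ V, v₀ ≠ 0 →
      α X v₀ = 0 → α v₀ v₀ = 0 → c = 0 := by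
    intro X hX hX0 v₀ hv₀ hv₀0 h1 h2
    have := eqE X hX X hX v₀ hv₀ v₀ hv₀
    rw [h1, h2] at this
    simp only [inner_zero_right, inner_zero_left, sub_zero] at this
    have hv : (0:ℝ) < ⟪v₀, v₀⟫ := lt_of_le_of_ne real_inner_self_nonneg
      (fun h => hv₀0 (inner_self_eq_zero.mp h.symm))
    have hX' : (0:ℝ) < ⟪X, X⟫ := lt_of_le_of_ne real_inner_self_nonneg
      (fun h => hX0 (inner_self_eq_zero.mp h.symm))
    have hmul : c * ⟪v₀, v₀⟫ * ⟪X, X⟫ = 0 := by linarith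
    rcases mul_eq_zero.mp hmul with h | h
    · rcases mul_eq_zero.mp h with h' | h'
      · exact h'
      · exact absurd h' (ne_of_gt hv)
    · exact absurd h (ne_of_gt hX')
  by_cases hsurj : Function.Surjective f₁ ∨ Function.Surjective f₂
  · -- Case 1: some f is surjective
    obtain ⟨X, hX, hX0, f, hfdef, hfs⟩ :
        ∃ X ∈ H, X ≠ 0 ∧ ∃ f : V →ₗ[ℝ] W, (∀ v : V, f v = α X v) ∧
          Function.Surjective f := by
      rcases hsurj with h | h
      · refine ⟨X₁, hX₁, ?_, f₁, fun v => rfl, h⟩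
        rintro rfl
        simp at hXv₁
        exact hw₁0 hXv₁.symm
      · refine ⟨X₂, hX₂, ?_, f₂, fun v => rfl, h⟩
        rintro rfl
        simp at hXv₂
        exact hw₂ (hXv₂ ▸ Submodule.zero_mem _)
    -- kernel of f is nontrivial
    have hker : LinearMap.ker f ≠ ⊥ := by
      intro hk
      have hinj : Function.Injective f := LinearMap.ker_eq_bot.mp hk
      have := LinearMap.finrank_le_finrank_of_injective hinj
      omega
    obtain ⟨v₀, hv₀k, hv₀0⟩ := Submodule.ne_bot_iff _ |>.mp hker
    have hv₀V : (v₀ : E) ∈ V := v₀.2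
    have hαXv₀ : α X (v₀ : E) = 0 := by
      have := hfdef v₀
      rw [LinearMap.mem_ker.mp hv₀k] at this
      exact this.symm
    -- α v₀ v₀ = 0 since it is orthogonal to the range of f, which is everything
    have hγ : α (v₀ : E) (v₀ : E) = 0 := by
      obtain ⟨w, hw⟩ := hfs (α (v₀ : E) (v₀ : E))
      have : ⟪α X (w : E), α (v₀ : E) (v₀ : E)⟫ = 0 := by
        rw [symC X hX (v₀:E) hv₀V (v₀:E) hv₀V (w:E) w.2, hαXv₀]
        simp
      rw [hfdef w] at hw
      rw [hw] at this
      exact inner_self_eq_zero.mp this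
    exact final X hX hX0 (v₀ : E) hv₀V (by simpa using hv₀0) hαXv₀ hγ
  · -- Case 2: neither is surjective, so both ranges have dimension ≤ 1
    push_neg at hsurj
    obtain ⟨hns₁, hns₂⟩ := hsurj
    have hrk : ∀ f : V →ₗ[ℝ] W, ¬Function.Surjective f →
        Module.finrank ℝ V - 1 ≤ Module.finrank ℝ (LinearMap.ker f) := by
      intro f hf
      have hne : LinearMap.range f ≠ ⊤ := fun h => hf (LinearMap.range_eq_top.mp h)
      have hlt : Module.finrank ℝ (LinearMap.range f) < Module.finrank ℝ W :=
        Submodule.finrank_lt hne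
      have := LinearMap.finrank_range_add_finrank_ker f
      omega
    have hk₁ := hrk f₁ hns₁
    have hk₂ := hrk f₂ hns₂
    -- the intersection of the kernels is nontrivial
    have hint : LinearMap.ker f₁ ⊓ LinearMap.ker f₂ ≠ ⊥ := by
      intro h
      have hsum := Submodule.finrank_sup_add_finrank_inf_eq
        (LinearMap.ker f₁) (LinearMap.ker f₂)
      rw [h] at hsum
      have hsup := Submodule.finrank_le (LinearMap.ker f₁ ⊔ LinearMap.ker f₂)
      simp [finrank_bot] at hsum
      omega
    obtain ⟨v₀, hv₀k, hv₀0⟩ := Submodule.ne_bot_iff _ |>.mp hint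
    obtain ⟨hk1, hk2⟩ := Submodule.mem_inf.mp hv₀k
    have hv₀V : (v₀ : E) ∈ V := v₀.2
    have h10 : α X₁ (v₀ : E) = 0 := LinearMap.mem_ker.mp hk1
    have h20 : α X₂ (v₀ : E) = 0 := LinearMap.mem_ker.mp hk2
    -- α Y v₀ = 0 for every Y ∈ H
    have hβ : ∀ Y ∈ H, α Y (v₀ : E) = 0 := by
      intro Y hY
      refine helper_orth hW2 hw₁0 hw₂ ?_ ?_
      · rw [← hXv₁, flat X₁ hX₁ Y hY (v₀:E) hv₀V v₁ hv₁, h10]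
        simp
      · rw [← hXv₂, flat X₂ hX₂ Y hY (v₀:E) hv₀V v₂ hv₂, h20]
        simp
    -- α v₀ v₀ = 0
    have hγ : α (v₀ : E) (v₀ : E) = 0 := by
      refine helper_orth hW2 hw₁0 hw₂ ?_ ?_
      · rw [← hXv₁, symC X₁ hX₁ (v₀:E) hv₀V (v₀:E) hv₀V v₁ hv₁, h10]
        simp
      · rw [← hXv₂, symC X₂ hX₂ (v₀:E) hv₀V (v₀:E) hv₀V v₂ hv₂, h20]
        simp
    obtain ⟨X, hXH, hX0⟩ := Submodule.ne_bot_iff _ |>.mp hH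
    exact final X hXH hX0 (v₀ : E) hv₀V (by simpa using hv₀0) (hβ X hXH) hγ

/-- Corollary 5.2(i) (pointwise): for an isometric immersion of a Riemannian
product in codimension two which is of type C at a point (`dim α(H,V) ≥ 2`),
if `dim H ≥ 3` or `dim V ≥ 3`, then `c = 0`.  The curvature-like tensor `C`
is given by the Gauss equation, and for a Riemannian product it satisfies
`C(X,V,W,Y) = −c⟨V,W⟩⟨X,Y⟩` as well as the vanishing identities (2.7)–(2.9)
with the roles of the factors interchangeable. -/
theorem stmt_13 {E W : Type*}
    [NormedAddCommGroup E] [InnerProductSpace ℝ E]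
    [NormedAddCommGroup W] [InnerProductSpace ℝ W] [FiniteDimensional ℝ W]
    (H V : Submodule ℝ E)
    (horth : ∀ x ∈ H, ∀ v ∈ V, ⟪x, v⟫ = 0)
    (hsup : H ⊔ V = ⊤)
    (hH : H ≠ ⊥) (hV : V ≠ ⊥)
    (hdim : 3 ≤ Module.finrank ℝ H ∨ 3 ≤ Module.finrank ℝ V)
    (hW2 : Module.finrank ℝ W = 2)
    (α : E →ₗ[ℝ] E →ₗ[ℝ] W)
    (hαsymm : ∀ u v : E, α u v = α v u)
    (c : ℝ) (C : E → E → E → E → ℝ)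
    (hGauss : ∀ a b u v : E,
      C a b u v = ⟪α a v, α b u⟫ - ⟪α a u, α b v⟫)
    (hC1 : ∀ X ∈ H, ∀ v ∈ V, ∀ w ∈ V, ∀ Y ∈ H,
      C X v w Y = -c * ⟪v, w⟫ * ⟪X, Y⟫)
    (hC1' : ∀ v ∈ V, ∀ X ∈ H, ∀ Y ∈ H, ∀ w ∈ V,
      C v X Y w = -c * ⟪X, Y⟫ * ⟪v, w⟫)
    (hC2 : ∀ X ∈ H, ∀ Y ∈ H, ∀ v ∈ V, ∀ Z ∈ H, C X Y v Z = 0)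
    (hC2' : ∀ v ∈ V, ∀ w ∈ V, ∀ X ∈ H, ∀ u ∈ V, C v w X u = 0)
    (hC3 : ∀ X ∈ H, ∀ Y ∈ H, ∀ v ∈ V, ∀ w ∈ V, C X Y v w = 0)
    (hC3' : ∀ v ∈ V, ∀ w ∈ V, ∀ X ∈ H, ∀ Y ∈ H, C v w X Y = 0)
    (hC4 : ∀ X ∈ H, ∀ u ∈ V, ∀ v ∈ V, ∀ w ∈ V, C X u v w = 0)
    (hC4' : ∀ v ∈ V, ∀ X ∈ H, ∀ Y ∈ H, ∀ Z ∈ H, C v X Y Z = 0)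
    (htypeC : 2 ≤ Module.finrank ℝ
      (Submodule.span ℝ {w : W | ∃ Y ∈ H, ∃ v ∈ V, α Y v = w})) :
    c = 0 := by
  rcases hdim with hdimH | hdimV
  · -- roles of H and V interchanged
    apply aux_key V H hV hdimH hW2 α c
    · intro v hv w hw X hX Y hY
      have := hC3' v hv w hw X hX Y hY
      rw [hGauss] at this
      linarith
    · intro v hv X hX Y hY Z hZ
      have := hC4' v hv X hX Y hY Z hZ
      rw [hGauss] at this
      linarith
    · intro v hv w hw X hX Y hY
      have := hC1' v hv X hX Y hY w hw
      rw [hGauss] at this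
      rw [hαsymm w X]
      linarith
    · have hset : {w : W | ∃ Y ∈ V, ∃ v ∈ H, α Y v = w}
          = {w : W | ∃ Y ∈ H, ∃ v ∈ V, α Y v = w} := by
        ext w
        constructor
        · rintro ⟨Y, hY, v, hv, rfl⟩
          exact ⟨v, hv, Y, hY, (hαsymm v Y).trans rfl⟩
        · rintro ⟨Y, hY, v, hv, rfl⟩
          exact ⟨v, hv, Y, hY, (hαsymm v Y).trans rfl⟩
      rw [hset]
      exact htypeC
  · apply aux_key H V hH hdimV hW2 α c
    · intro X hX Y hY v hv w hw
      have := hC3 X hX Y hY v hv w hw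
      rw [hGauss] at this
      linarith
    · intro X hX u hu v hv w hw
      have := hC4 X hX u hu v hv w hw
      rw [hGauss] at this
      linarith
    · intro X hX Y hY v hv w hw
      have := hC1 X hX v hv w hw Y hY
      rw [hGauss] at this
      rw [hαsymm Y v]
      linarith
    · exact htypeC
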